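/- Let 1 < p < 2 and let x, y ∈ [-1,1]. Then (1/p)|x|^p + ((p-1)/p)|y|^p − |x||y|^{p-1} sign(xy) ≥ ((p-1)²/p) (x − y)². -/

import Mathlib

open Real

/-- On `[0,1]`, `a ^ 2 ≤ a ^ p` for `0 < p ≤ 2`. -/
lemma sq_le_rpow_aux (a p : ℝ) (ha0 : 0 ≤ a) (ha1 : a ≤ 1) (hp0 : 0 < p) (hp : p ≤ 2) :
    a ^ 2 ≤ a ^ p := by
  rcases eq_or_lt_of_le ha0 with rfl | ha0'
  · rw [Real.zero_rpow hp0.ne']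
    norm_num
  · have h2 : a ^ (2 : ℕ) = a ^ (2 : ℝ) := by
      rw [← Real.rpow_natCast]; norm_num
    rw [h2]
    exact Real.rpow_le_rpow_of_exponent_ge ha0' ha1 hp

/-- Tangent-type inequality: for `0 < q ≤ 1` and `0 ≤ u ≤ v ≤ 1`,
`q * (v - u) ≤ v ^ q - u ^ q`. -/
lemma tangent_aux (q u v : ℝ) (hq0 : 0 < q) (hq1 : q ≤ 1) (hu : 0 ≤ u) (huv : u ≤ v)
    (hv : v ≤ 1) : q * (v - u) ≤ v ^ q - u ^ q := by
  rcases eq_or_lt_of_le (hu.trans huv) with rfl | hv0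
  · have : u = 0 := le_antisymm huv hu
    simp [this]
  -- Bernoulli with s = u/v - 1
  have hs : -1 ≤ u / v - 1 := by
    have : 0 ≤ u / v := div_nonneg hu hv0.le
    linarith
  have hb := rpow_one_add_le_one_add_mul_self hs hq0.le hq1
  have h1 : (1 : ℝ) + (u / v - 1) = u / v := by ring
  rw [h1] at hb
  -- hb : (u/v)^q ≤ 1 + q * (u/v - 1)
  have hdiv : (u / v) ^ q = u ^ q / v ^ q := Real.div_rpow hu hv0.le q
  rw [hdiv] at hb
  have hvq : 0 < v ^ q := Real.rpow_pos_of_pos hv0 q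
  have hb2 : u ^ q ≤ v ^ q + q * (u / v - 1) * v ^ q := by
    have := mul_le_mul_of_nonneg_right hb hvq.le
    rw [div_mul_cancel₀ _ hvq.ne'] at this
    linarith [this]
  have hv' : (u / v - 1) * v = u - v := by field_simp
  have hfact : q * (u / v - 1) * v ^ q = q * (u - v) * v ^ (q - 1) := by
    have : v ^ q = v * v ^ (q - 1) := by
      rw [← Real.rpow_one_add' hv0.le (by linarith : (1 : ℝ) + (q - 1) ≠ 0)]
      norm_num
    rw [this]
    calc q * (u / v - 1) * (v * v ^ (q - 1)) = q * ((u / v - 1) * v) * v ^ (q - 1) := by ring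
      _ = q * (u - v) * v ^ (q - 1) := by rw [hv']
  rw [hfact] at hb2
  -- v ^ (q-1) ≥ 1
  have hvq1 : 1 ≤ v ^ (q - 1) :=
    Real.one_le_rpow_of_pos_of_le_one_of_nonpos hv0 hv (by linarith)
  have : q * (u - v) * v ^ (q - 1) ≤ q * (u - v) := by
    have huv' : q * (u - v) ≤ 0 := mul_nonpos_of_nonneg_of_nonpos hq0.le (by linarith)
    nlinarith
  nlinarith

/-- Scalar Bregman lower bound with constant `(p-1)/2`. -/
lemma bregman_aux (p a b : ℝ) (hp1 : 1 < p) (hp2 : p < 2) (ha0 : 0 ≤ a) (ha1 : a ≤ 1)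
    (hb0 : 0 ≤ b) (hb1 : b ≤ 1) :
    (p - 1) / 2 * (a - b) ^ 2 ≤ 1 / p * a ^ p + (p - 1) / p * b ^ p - a * b ^ (p - 1) := by
  have hp0 : (0 : ℝ) < p := by linarith
  set F : ℝ → ℝ := fun t =>
    1 / p * t ^ p + (p - 1) / p * b ^ p - t * b ^ (p - 1) - (p - 1) / 2 * (t - b) ^ 2 with hFdef
  have hF : ∀ t : ℝ, HasDerivAt F (t ^ (p - 1) - b ^ (p - 1) - (p - 1) * (t - b)) t := by
    intro t
    have h1 : HasDerivAt (fun t : ℝ => t ^ p) (p * t ^ (p - 1)) t :=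
      Real.hasDerivAt_rpow_const (Or.inr hp1.le)
    have h2 : HasDerivAt (fun t : ℝ => (t - b) ^ 2) (2 * (t - b)) t := by
      have := ((hasDerivAt_id t).sub_const b).pow 2
      simp at this
      exact this
    have h3 := (((h1.const_mul (1 / p)).add_const ((p - 1) / p * b ^ p)).sub
        ((hasDerivAt_id t).mul_const (b ^ (p - 1)))).sub (h2.const_mul ((p - 1) / 2))
    refine h3.congr_deriv ?_
    field_simp
  have hFb : F b = 0 := by
    have hbp : b * b ^ (p - 1) = b ^ p := by
      rcases eq_or_lt_of_le hb0 with rfl | hb0'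
      · rw [Real.zero_rpow (by linarith : p ≠ 0), Real.zero_rpow (by linarith : p - 1 ≠ 0)]
        ring
      · rw [← Real.rpow_one_add' hb0'.le (by linarith : (1 : ℝ) + (p - 1) ≠ 0)]
        norm_num
    simp only [hFdef]
    rw [← hbp]
    field_simp
    ring
  have hdiff : Differentiable ℝ F := fun t => (hF t).differentiableAt
  have key : 0 ≤ F a := by
    rcases le_total b a with hba | hab
    · -- monotone on [b, 1]
      have hmono : MonotoneOn F (Set.Icc b 1) := by
        apply monotoneOn_of_deriv_nonneg (convex_Icc b 1) hdiff.continuous.continuousOn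
          (hdiff.differentiableOn)
        intro t ht
        rw [interior_Icc] at ht
        rw [(hF t).deriv]
        have := tangent_aux (p - 1) b t (by linarith) (by linarith) hb0 ht.1.le ht.2.le
        nlinarith
      have := hmono (Set.mem_Icc.mpr ⟨le_refl b, hb1⟩) (Set.mem_Icc.mpr ⟨hba, ha1⟩) hba
      linarith [hFb ▸ this]
    · -- antitone on [0, b]
      have hanti : AntitoneOn F (Set.Icc 0 b) := by
        apply antitoneOn_of_deriv_nonpos (convex_Icc 0 b) hdiff.continuous.continuousOn
          (hdiff.differentiableOn)
        intro t ht
        rw [interior_Icc] at ht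
        rw [(hF t).deriv]
        have := tangent_aux (p - 1) t b (by linarith) (by linarith) ht.1.le ht.2.le hb1
        nlinarith
      have := hanti (Set.mem_Icc.mpr ⟨ha0, hab⟩) (Set.mem_Icc.mpr ⟨hb0, le_refl b⟩) hab
      linarith [hFb ▸ this]
  simp only [hFdef] at key
  linarith

/-- Scalar Bregman-divergence inequality for `1 < p < 2` and `x, y ∈ [-1, 1]`:
`(1/p)|x|^p + ((p-1)/p)|y|^p − |x||y|^{p-1} sign(xy) ≥ ((p-1)²/p) (x − y)²`. -/
theorem scalar_bregman_lower_bound_lt_two (p x y : ℝ) (hp1 : 1 < p) (hp2 : p < 2)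
    (hx : x ∈ Set.Icc (-1 : ℝ) 1) (hy : y ∈ Set.Icc (-1 : ℝ) 1) :
    ((p - 1) ^ 2 / p) * (x - y) ^ 2 ≤
      (1 / p) * |x| ^ p + ((p - 1) / p) * |y| ^ p
        - |x| * |y| ^ (p - 1) * Real.sign (x * y) := by
  obtain ⟨hx1, hx2⟩ := hx
  obtain ⟨hy1, hy2⟩ := hy
  have hp0 : (0 : ℝ) < p := by linarith
  have ha0 : 0 ≤ |x| := abs_nonneg x
  have hb0 : 0 ≤ |y| := abs_nonneg y
  have ha1 : |x| ≤ 1 := abs_le.mpr ⟨hx1, hx2⟩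
  have hb1 : |y| ≤ 1 := abs_le.mpr ⟨hy1, hy2⟩
  have hxp : x ^ 2 ≤ |x| ^ p := by
    rw [← sq_abs]; exact sq_le_rpow_aux _ p ha0 ha1 hp0 hp2.le
  have hyp : y ^ 2 ≤ |y| ^ p := by
    rw [← sq_abs]; exact sq_le_rpow_aux _ p hb0 hb1 hp0 hp2.le
  have hq1 : (0:ℝ) ≤ p - 1 := by linarith
  have hq2 : (0:ℝ) ≤ 2 - p := by linarith
  rcases lt_trichotomy (x * y) 0 with hneg | hzero | hpos
  · -- opposite signs
    rw [Real.sign_of_neg hneg]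
    have hy0 : y ≠ 0 := fun h => by simp [h] at hneg
    have hb0' : 0 < |y| := abs_pos.mpr hy0
    have hbq : |y| ≤ |y| ^ (p - 1) := by
      have : |y| ^ (1 : ℝ) ≤ |y| ^ (p - 1) :=
        Real.rpow_le_rpow_of_exponent_ge hb0' hb1 (by linarith)
      rwa [Real.rpow_one] at this
    have hsub : (x - y) ^ 2 ≤ (|x| + |y|) ^ 2 := by
      have h1 : |x - y| ≤ |x| + |y| := abs_sub x y
      calc (x - y) ^ 2 = |x - y| ^ 2 := (sq_abs _).symm
        _ ≤ (|x| + |y|) ^ 2 := by nlinarith [abs_nonneg (x - y)]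
    have hxap : |x| ^ 2 ≤ |x| ^ p := sq_le_rpow_aux _ p ha0 ha1 hp0 hp2.le
    have hyap : |y| ^ 2 ≤ |y| ^ p := sq_le_rpow_aux _ p hb0 hb1 hp0 hp2.le
    have hpoly : (p - 1) ^ 2 * (|x| + |y|) ^ 2 ≤
        |x| ^ 2 + (p - 1) * |y| ^ 2 + p * (|x| * |y|) := by
      have t1 : 0 ≤ ((2 - p) * p) * |x| ^ 2 :=
        mul_nonneg (mul_nonneg hq2 hp0.le) (sq_nonneg _)
      have t2 : 0 ≤ ((p - 1) * (2 - p)) * |y| ^ 2 :=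
        mul_nonneg (mul_nonneg hq1 hq2) (sq_nonneg _)
      have t3 : 0 ≤ ((2 * p - 1) * (2 - p)) * (|x| * |y|) :=
        mul_nonneg (mul_nonneg (by linarith) hq2) (mul_nonneg ha0 hb0)
      nlinarith [t1, t2, t3]
    have hC : p * (|x| * |y|) ≤ p * (|x| * |y| ^ (p - 1)) :=
      mul_le_mul_of_nonneg_left (mul_le_mul_of_nonneg_left hbq ha0) hp0.le
    have hB2 : (p - 1) * |y| ^ 2 ≤ (p - 1) * |y| ^ p := mul_le_mul_of_nonneg_left hyap hq1
    have key : (p - 1) ^ 2 * (|x| + |y|) ^ 2 ≤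
        |x| ^ p + (p - 1) * |y| ^ p + p * (|x| * |y| ^ (p - 1)) := by linarith
    have hxy2 : (p - 1) ^ 2 * (x - y) ^ 2 ≤ (p - 1) ^ 2 * (|x| + |y|) ^ 2 :=
      mul_le_mul_of_nonneg_left hsub (sq_nonneg _)
    rw [div_mul_eq_mul_div, div_le_iff₀ hp0]
    have e1 : (1 / p * |x| ^ p + (p - 1) / p * |y| ^ p - |x| * |y| ^ (p - 1) * (-1)) * p
        = |x| ^ p + (p - 1) * |y| ^ p + p * (|x| * |y| ^ (p - 1)) := by
      field_simp
      ring
    rw [e1]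
    linarith
  · -- one of them is zero
    rw [hzero, Real.sign_zero, mul_zero, sub_zero]
    rcases mul_eq_zero.mp hzero with hx0 | hy0
    · subst hx0
      rw [div_mul_eq_mul_div, div_le_iff₀ hp0]
      have e1 : (1 / p * |(0:ℝ)| ^ p + (p - 1) / p * |y| ^ p) * p = (p - 1) * |y| ^ p := by
        rw [abs_zero, Real.zero_rpow (by linarith : p ≠ 0)]
        field_simp
        ring
      rw [e1]
      have e2 : (0 - y) ^ 2 = y ^ 2 := by ring
      rw [e2]
      nlinarith [hyp, mul_nonneg hq1 (sub_nonneg.mpr hyp),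
        mul_nonneg (mul_nonneg hq1 hq2) (sq_nonneg y)]
    · subst hy0
      rw [div_mul_eq_mul_div, div_le_iff₀ hp0]
      have e1 : (1 / p * |x| ^ p + (p - 1) / p * |(0:ℝ)| ^ p) * p = |x| ^ p := by
        rw [abs_zero, Real.zero_rpow (by linarith : p ≠ 0)]
        field_simp
        ring
      rw [e1]
      have e2 : (x - 0) ^ 2 = x ^ 2 := by ring
      rw [e2]
      nlinarith [hxp, mul_nonneg (mul_nonneg hp0.le hq2) (sq_nonneg x)]
  · -- same sign
    rw [Real.sign_of_pos hpos, mul_one]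
    have habs : |x| * |y| = x * y := by rw [← abs_mul, abs_of_pos hpos]
    have hsq : (x - y) ^ 2 = (|x| - |y|) ^ 2 := by
      linear_combination (-1) * sq_abs x + (-1) * sq_abs y + 2 * habs
    rw [hsq]
    have hB := bregman_aux p |x| |y| hp1 hp2 ha0 ha1 hb0 hb1
    have hcoef : (p - 1) ^ 2 / p ≤ (p - 1) / 2 := by
      rw [div_le_div_iff₀ hp0 (by norm_num)]
      nlinarith
    calc (p - 1) ^ 2 / p * (|x| - |y|) ^ 2 ≤ (p - 1) / 2 * (|x| - |y|) ^ 2 :=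
        mul_le_mul_of_nonneg_right hcoef (sq_nonneg _)
      _ ≤ 1 / p * |x| ^ p + (p - 1) / p * |y| ^ p - |x| * |y| ^ (p - 1) := hB
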